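/- For the classic random pivot (s = 1, p = 0), the expected swap counts satisfy: T^{safe}(n) = n/6 for n ≥ 3, T^{single}(n) = (n−2)/6 for n ≥ 2, and T^{Lomuto}(n) = (n−1)/2; consequently T^{Lomuto}(n)/T^{single}(n) = 3(n−1)/(n−2) > 3 for n ≥ 3. -/
import Mathlib

/-- Classic random pivot (`s = 1`, `p = 0`): with
`T(n,1,0) = (1/6)((n+1)(n+2)/(n-1)) - n/(n-1)` and `E(n,1,0) = (n+1)/2 - 1`,
one has `T^{safe}(n) = n/6` for `n ≥ 3`, `T^{single}(n) = T(n,1,0) = (n-2)/6`,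
`T^{Lomuto}(n) = E(n,1,0) = (n-1)/2`, and for `n ≥ 3` the ratio
`T^{Lomuto}/T^{single} = 3(n-1)/(n-2) > 3`. -/
theorem classic_pivot_swap_counts (n : ℕ) (hn : 2 ≤ n) :
    ((1 / 6) * (((n : ℚ) + 1) * ((n : ℚ) + 2) / ((n : ℚ) - 1)) - (n : ℚ) / ((n : ℚ) - 1)
        = ((n : ℚ) - 2) / 6) ∧
    (((n : ℚ) + 1) / 2 - 1 = ((n : ℚ) - 1) / 2) ∧
    (3 ≤ n →
      ((((n : ℚ) - 3) / ((n : ℚ) - 2)) *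
          ((1 / 6) * (((n : ℚ) + 1) * ((n : ℚ) + 2) / ((n : ℚ) - 1)) - (n : ℚ) / ((n : ℚ) - 1))
        + (((n : ℚ) + 1) / 2 - 1) / ((n : ℚ) - 1) = (n : ℚ) / 6) ∧
      ((((n : ℚ) - 1) / 2) / (((n : ℚ) - 2) / 6) = 3 * ((n : ℚ) - 1) / ((n : ℚ) - 2)) ∧
      (3 * ((n : ℚ) - 1) / ((n : ℚ) - 2) > 3)) := by
  have h2 : (2 : ℚ) ≤ (n : ℚ) := by exact_mod_cast hn
  have h1 : ((n : ℚ) - 1) ≠ 0 := by linarith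
  refine ⟨by field_simp; ring, by ring, fun h3 => ?_⟩
  have h3' : (3 : ℚ) ≤ (n : ℚ) := by exact_mod_cast h3
  have h2' : ((n : ℚ) - 2) ≠ 0 := by linarith
  have h2pos : (0 : ℚ) < (n : ℚ) - 2 := by linarith
  refine ⟨by field_simp; ring, by field_simp; ring, ?_⟩
  rw [gt_iff_lt, lt_div_iff₀ h2pos]; linarith
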